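/- Let k \ge 1 and let j be the unique nonnegative integer with p^j \le k < p^{j+1}. Then for all s, t \in \mathbb{Z}_p, |\binom{s}{k} - \binom{t}{k}|_p \le p^j |s-t|_p. -/

import Mathlib

open Polynomial Finset

section aux
variable {p : ℕ} [Fact p.Prime]

lemma padicBinom_aux_eq_choose (k : ℕ) (x : ℚ_[p]) :
    (descPochhammer ℚ_[p] k).eval x / (k.factorial : ℚ_[p]) = Ring.choose x k := by
  have h0 : (descPochhammer ℚ_[p] k).eval x = (descPochhammer ℤ k).smeval x := by
    rw [← descPochhammer_map (algebraMap ℤ ℚ_[p]), eval_map, ← aeval_def, aeval_eq_smeval]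
  rw [h0, Ring.descPochhammer_eq_factorial_smul_choose, nsmul_eq_mul,
    mul_div_cancel_left₀]
  exact_mod_cast (Nat.cast_ne_zero (R := ℚ_[p])).mpr k.factorial_ne_zero

lemma choose_norm_le_one (i : ℕ) (x : ℤ_[p]) : ‖Ring.choose (x : ℚ_[p]) i‖ ≤ 1 := by
  have hcont : Continuous fun y : ℤ_[p] =>
      ‖(descPochhammer ℚ_[p] i).eval (y : ℚ_[p]) / (i.factorial : ℚ_[p])‖ := by
    fun_prop
  have := PadicInt.denseRange_natCast (p := p)
  rw [← padicBinom_aux_eq_choose i (x : ℚ_[p])]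
  refine DenseRange.induction_on (p := fun y : ℤ_[p] =>
      ‖(descPochhammer ℚ_[p] i).eval (y : ℚ_[p]) / (i.factorial : ℚ_[p])‖ ≤ 1)
    this x (isClosed_le hcont continuous_const) ?_
  intro n
  have : ((n : ℤ_[p]) : ℚ_[p]) = (n : ℚ_[p]) := by push_cast; ring
  rw [this, padicBinom_aux_eq_choose, Ring.choose_natCast]
  exact Padic.norm_int_le_one _

end aux

section aux2
variable {p : ℕ} [Fact p.Prime]

lemma nat_norm_inv_le (m j : ℕ) (hm : 1 ≤ m) (hmlt : m < p^(j+1)) :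
    ‖((m : ℚ_[p]))‖⁻¹ ≤ (p : ℝ)^j := by
  have hp1 : 1 < p := (Fact.out : p.Prime).one_lt
  have hm0 : m ≠ 0 := by omega
  have hv : padicValNat p m ≤ j := by
    by_contra h
    have hd := pow_padicValNat_dvd (p := p) (n := m)
    have := Nat.le_of_dvd (by omega) hd
    have : p ^ (j+1) ≤ p ^ padicValNat p m := Nat.pow_le_pow_right (by omega) (by omega)
    omega
  have hnorm : ‖((m : ℚ_[p]))‖ = (p : ℝ) ^ (-(padicValNat p m : ℤ)) := by
    rw [Padic.norm_eq_zpow_neg_valuation (by exact_mod_cast hm0), Padic.valuation_natCast]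
  rw [hnorm, ← zpow_neg, neg_neg, zpow_natCast]
  exact pow_le_pow_right₀ (by exact_mod_cast hp1.le) hv

lemma choose_norm_le (m j : ℕ) (hm : 1 ≤ m) (hmlt : m < p^(j+1)) (u : ℤ_[p]) :
    ‖Ring.choose (u : ℚ_[p]) m‖ ≤ (p : ℝ)^j * ‖(u : ℚ_[p])‖ := by
  cases m with
  | zero => omega
  | succ n =>
    rw [← padicBinom_aux_eq_choose]
    have heval : (descPochhammer ℚ_[p] (n+1)).eval (u : ℚ_[p]) =
        (u : ℚ_[p]) * (descPochhammer ℚ_[p] n).eval ((u : ℚ_[p]) - 1) := by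
      rw [descPochhammer_succ_left, eval_mul, eval_X, eval_comp, eval_sub, eval_X, eval_one]
    have hfac : ((n+1).factorial : ℚ_[p]) = ((n+1 : ℕ) : ℚ_[p]) * (n.factorial : ℚ_[p]) := by
      rw [Nat.factorial_succ]; push_cast; ring
    rw [heval, hfac, ← div_mul_div_comm]
    have hcast : ((u : ℚ_[p]) - 1) = (((u - 1 : ℤ_[p]) : ℚ_[p])) := by push_cast; ring
    rw [hcast, padicBinom_aux_eq_choose]
    rw [norm_mul, norm_div]
    have h1 : ‖Ring.choose (((u - 1 : ℤ_[p]) : ℚ_[p])) n‖ ≤ 1 := choose_norm_le_one n _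
    have h2 : ‖((n+1 : ℕ) : ℚ_[p])‖⁻¹ ≤ (p : ℝ)^j := nat_norm_inv_le (n+1) j (by omega) hmlt
    calc ‖(u : ℚ_[p])‖ / ‖((n+1 : ℕ) : ℚ_[p])‖ * ‖Ring.choose (((u - 1 : ℤ_[p]) : ℚ_[p])) n‖
        ≤ ‖(u : ℚ_[p])‖ / ‖((n+1 : ℕ) : ℚ_[p])‖ * 1 := by
          gcongr
      _ = ‖(u : ℚ_[p])‖ * ‖((n+1 : ℕ) : ℚ_[p])‖⁻¹ := by rw [mul_one, div_eq_mul_inv]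
      _ ≤ ‖(u : ℚ_[p])‖ * (p : ℝ)^j := by gcongr
      _ = (p : ℝ)^j * ‖(u : ℚ_[p])‖ := mul_comm _ _

end aux2

/-- The binomial coefficient polynomial `x ↦ x(x-1)⋯(x-k+1)/k!` evaluated at a
`p`-adic number. -/
noncomputable def padicBinom (p : ℕ) [Fact p.Prime] (k : ℕ) (x : ℚ_[p]) : ℚ_[p] :=
  (descPochhammer ℚ_[p] k).eval x / (k.factorial : ℚ_[p])

/-- For `k ≥ 1` with `p^j ≤ k < p^{j+1}` and `s, t ∈ ℤ_p`:
`|binom(s,k) - binom(t,k)|_p ≤ p^j |s - t|_p`. -/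
theorem stmt_5 (p : ℕ) [Fact p.Prime] (k j : ℕ) (hk : 1 ≤ k)
    (h1 : p^j ≤ k) (h2 : k < p^(j+1)) (s t : ℤ_[p]) :
    ‖padicBinom p k (s : ℚ_[p]) - padicBinom p k (t : ℚ_[p])‖ ≤
      (p : ℝ)^j * ‖(s : ℚ_[p]) - (t : ℚ_[p])‖ := by
  have hu : ((s - t : ℤ_[p]) : ℚ_[p]) = (s : ℚ_[p]) - (t : ℚ_[p]) := by push_cast; ring
  simp only [padicBinom, padicBinom_aux_eq_choose]
  have hsu : (s : ℚ_[p]) = (t : ℚ_[p]) + ((s - t : ℤ_[p]) : ℚ_[p]) := by rw [hu]; ring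
  rw [hsu, Ring.add_choose_eq k (Commute.all _ _)]
  have hk0 : ((k, 0) : ℕ × ℕ) ∈ Finset.HasAntidiagonal.antidiagonal k := by simp
  rw [← Finset.add_sum_erase _ _ hk0]
  have hterm : Ring.choose ((t : ℚ_[p])) (k, 0).1 * Ring.choose (((s - t : ℤ_[p]) : ℚ_[p])) (k, 0).2
      = Ring.choose ((t : ℚ_[p])) k := by
    simp [Ring.choose_zero_right]
  rw [hterm, add_sub_cancel_left, add_sub_cancel_left]
  refine IsUltrametricDist.norm_sum_le_of_forall_le_of_nonneg
    (by positivity) ?_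
  intro ij hij
  obtain ⟨hne, hmem⟩ := Finset.mem_erase.mp hij
  rw [Finset.HasAntidiagonal.mem_antidiagonal] at hmem
  have hij2 : 1 ≤ ij.2 := by
    rcases Nat.eq_zero_or_pos ij.2 with h | h
    · exfalso; apply hne; ext <;> simp [h, ← hmem]
    · exact h
  have hij2' : ij.2 < p^(j+1) := by omega
  rw [norm_mul]
  calc ‖Ring.choose ((t : ℚ_[p])) ij.1‖ * ‖Ring.choose (((s - t : ℤ_[p]) : ℚ_[p])) ij.2‖
      ≤ 1 * ((p : ℝ)^j * ‖((s - t : ℤ_[p]) : ℚ_[p])‖) := by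
        gcongr
        · exact choose_norm_le_one _ _
        · exact choose_norm_le _ _ hij2 hij2' _
    _ = (p : ℝ)^j * ‖((s - t : ℤ_[p]) : ℚ_[p])‖ := one_mul _
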